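/- Let l ≥ 2 and let A be an l×l positive definite Hermitian complex matrix, written in block form A = [[A₁₁, u],[u*, B]] where A₁₁ is the (1,1) scalar entry, u is a 1×(l−1) row vector, and B is the (l−1)×(l−1) lower-right block. Suppose that A₁₁ ≥ A_{ii} for every diagonal entry A_{ii} of A, and that the Schur complement B − (1/A₁₁)·u*u satisfies B − (1/A₁₁)·u*u − a·I_{l−1} positive semidefinite for some a > 0. Then A − (a/(2l))·I_l is positive semidefinite. -/

import Mathlib

open Matrix
open scoped ComplexOrder

private theorem entry_bound' {m : Type*} [Fintype m] [DecidableEq m] (M : Matrix m m ℂ)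
    (hM : M.PosSemidef) (i j : m) (hij : i ≠ j) (hii : 0 < (M i i).re) :
    Complex.normSq (M i j) ≤ (M i i).re * (M j j).re := by
  have hMii : (M i i) = ((M i i).re : ℂ) := by
    have := congrFun (congrFun hM.1 i) i
    simp only [conjTranspose_apply] at this
    exact ((Complex.conj_eq_iff_re.mp this)).symm
  have hMji : M j i = starRingEnd ℂ (M i j) := by
    have := congrFun (congrFun hM.1 j) i
    simpa [conjTranspose_apply] using this.symm
  have h2 := hM.dotProduct_mulVec_nonneg (Pi.single i (-(M i j)) + Pi.single j ((M i i).re : ℂ))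
  simp only [mulVec_add, mulVec_single, Pi.smul_apply, col_apply, MulOpposite.smul_eq_mul_unop,
    MulOpposite.unop_op, star_add, ← Pi.single_star, add_dotProduct,
    single_dotProduct, Pi.add_apply, Pi.single_eq_same,
    Pi.single_eq_of_ne hij, Pi.single_eq_of_ne hij.symm, star_neg, RCLike.star_def,
    Complex.conj_ofReal, add_zero, zero_add] at h2
  rw [Complex.le_def] at h2
  obtain ⟨h2re, -⟩ := h2
  rw [hMji, hMii] at h2re
  simp only [Complex.add_re, Complex.add_im, Complex.mul_re, Complex.mul_im,
    Complex.neg_re, Complex.neg_im, Complex.conj_re, Complex.conj_im,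
    Complex.ofReal_re, Complex.ofReal_im, Complex.zero_re] at h2re
  ring_nf at h2re
  have hnormSq : Complex.normSq (M i j) = (M i j).re^2 + (M i j).im^2 := by
    simp [Complex.normSq_apply]; ring
  nlinarith [h2re, hii, sq_nonneg (M i j).re, sq_nonneg (M i j).im]

set_option maxHeartbeats 1000000 in
/-- Lemma: if `A` is positive definite with maximal (1,1) diagonal entry and the Schur
complement of the (1,1) entry is `≥ a`, then `A ≥ a/(2l)`.  Here the size is
`l = n + 2 ≥ 2`, the row vector `u` has entries `u j = A 0 j.succ`, the lower-right
block is `B i j = A i.succ j.succ`, and the Schur complement is `B - (1/A₁₁)·u*u`. -/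
theorem stmt5 {n : ℕ} (A : Matrix (Fin (n + 2)) (Fin (n + 2)) ℂ) (hA : A.PosDef)
    (hdiag : ∀ i, (A i i).re ≤ (A 0 0).re) (a : ℝ) (ha : 0 < a)
    (hschur : (Matrix.of (fun i j : Fin (n + 1) =>
        A i.succ j.succ - (1 / A 0 0) * (star (A 0 i.succ) * A 0 j.succ)) -
        (a : ℝ) • (1 : Matrix (Fin (n + 1)) (Fin (n + 1)) ℂ)).PosSemidef) :
    (A - (a / (2 * (n + 2)) : ℝ) •
        (1 : Matrix (Fin (n + 2)) (Fin (n + 2)) ℂ)).PosSemidef := by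
  have conj := starRingEnd ℂ
  set α : ℝ := (A 0 0).re with hαdef
  -- A 0 0 is real
  have hA00 : A 0 0 = (α : ℂ) := by
    have := congrFun (congrFun hA.1 0) 0
    simp only [conjTranspose_apply] at this
    exact ((Complex.conj_eq_iff_re.mp this)).symm
  -- α is positive
  have hα : 0 < α := by
    have hne : (Pi.single 0 1 : Fin (n+2) → ℂ) ≠ 0 := by
      intro h
      simpa using congrFun h 0
    have h0 := hA.dotProduct_mulVec_pos hne
    have hval : star (Pi.single 0 1 : Fin (n+2) → ℂ) ⬝ᵥ A *ᵥ (Pi.single 0 1) = A 0 0 := by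
      simp [mulVec_single, ← Pi.single_star, single_dotProduct]
    rw [hval] at h0
    exact (Complex.lt_def.mp h0).1
  have hα0 : (α : ℂ) ≠ 0 := by exact_mod_cast hα.ne'
  -- entry bound : |A 0 j.succ| ≤ α
  have hub : ∀ j : Fin (n+1), ‖A 0 j.succ‖ ≤ α := by
    intro j
    have h1 := entry_bound' A hA.posSemidef 0 j.succ (Fin.succ_ne_zero j).symm hα
    have h2 := hdiag j.succ
    have h3 := Complex.sq_norm (A 0 j.succ)
    nlinarith [norm_nonneg (A 0 j.succ)]
  -- a ≤ α
  have ha' : a ≤ α := by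
    have hne : (Pi.single 0 1 : Fin (n+1) → ℂ) ≠ 0 := by
      intro h; simpa using congrFun h 0
    have h0 := hschur.dotProduct_mulVec_nonneg (Pi.single 0 1)
    set i1 : Fin (n+2) := (0 : Fin (n+1)).succ with hi1
    have hval : star (Pi.single 0 1 : Fin (n+1) → ℂ) ⬝ᵥ
        ((Matrix.of (fun i j : Fin (n + 1) =>
        A i.succ j.succ - (1 / A 0 0) * (star (A 0 i.succ) * A 0 j.succ)) -
        (a : ℝ) • (1 : Matrix (Fin (n + 1)) (Fin (n + 1)) ℂ)) *ᵥ (Pi.single 0 1))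
        = A i1 i1 - (1/(α:ℂ)) * ((Complex.normSq (A 0 i1) : ℝ) : ℂ) - (a : ℂ) := by
      simp only [mulVec_single, MulOpposite.op_one, one_smul, col_apply, ← Pi.single_star,
        single_dotProduct, star_one, one_mul,
        Matrix.sub_apply, of_apply, Matrix.smul_apply, one_apply_eq, hA00]
      rw [RCLike.star_def]
      rw [Complex.normSq_eq_conj_mul_self]
      simp only [Complex.real_smul, mul_one]
      rfl
    rw [hval] at h0
    rw [Complex.le_def] at h0
    obtain ⟨h0re, -⟩ := h0
    have h1 : ((1/(α:ℂ)) * ((Complex.normSq (A 0 i1) : ℝ) : ℂ)) =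
        ((Complex.normSq (A 0 i1) / α : ℝ) : ℂ) := by
      push_cast; ring
    rw [h1] at h0re
    simp only [Complex.sub_re, Complex.ofReal_re, Complex.zero_re] at h0re
    have h2 := hdiag i1
    have h3 : 0 ≤ Complex.normSq (A 0 i1) / α := div_nonneg (Complex.normSq_nonneg _) hα.le
    linarith
  -- main quadratic form bound
  refine PosSemidef.of_dotProduct_mulVec_nonneg ?_ ?_
  · -- Hermitian
    refine IsHermitian.sub hA.1 ?_
    ext i j
    by_cases h : i = j
    · simp [conjTranspose_apply, Matrix.one_apply, h, Complex.real_smul]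
    · simp [conjTranspose_apply, Matrix.one_apply, h, Ne.symm h, Complex.real_smul]
  intro x
  set s : ℂ := ∑ j : Fin (n+1), A 0 j.succ * x j.succ with hs
  set c : ℂ := x 0 + s / (α : ℂ) with hc
  set QB : ℂ := ∑ i : Fin (n+1), starRingEnd ℂ (x i.succ) * ∑ j : Fin (n+1),
      A i.succ j.succ * x j.succ with hQB
  set Ny : ℂ := ∑ i : Fin (n+1), starRingEnd ℂ (x i.succ) * x i.succ with hNy
  set ry : ℝ := ∑ i : Fin (n+1), Complex.normSq (x i.succ) with hry
  have hconj : ∀ i : Fin (n+1), A i.succ 0 = starRingEnd ℂ (A 0 i.succ) := by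
    intro i
    have := congrFun (congrFun hA.1 i.succ) 0
    simpa [conjTranspose_apply] using this.symm
  -- expansion of the quadratic form of A
  have hQ : star x ⬝ᵥ A *ᵥ x = starRingEnd ℂ (x 0) * (A 0 0 * x 0)
      + starRingEnd ℂ (x 0) * s + starRingEnd ℂ s * x 0 + QB := by
    have e1 : star x ⬝ᵥ A *ᵥ x = ∑ i, starRingEnd ℂ (x i) * ∑ j, A i j * x j := by
      simp [dotProduct, mulVec, RCLike.star_def]
    rw [e1, Fin.sum_univ_succ]
    rw [Fin.sum_univ_succ (f := fun j => A 0 j * x j)]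
    have e2 : ∀ i : Fin (n+1), starRingEnd ℂ (x i.succ) * ∑ j, A i.succ j * x j
        = starRingEnd ℂ (x i.succ) * (starRingEnd ℂ (A 0 i.succ) * x 0)
          + starRingEnd ℂ (x i.succ) * ∑ j : Fin (n+1), A i.succ j.succ * x j.succ := by
      intro i
      rw [Fin.sum_univ_succ, hconj i, mul_add]
    rw [Finset.sum_congr rfl (fun i _ => e2 i), Finset.sum_add_distrib]
    have e3 : ∑ i : Fin (n+1), starRingEnd ℂ (x i.succ) * (starRingEnd ℂ (A 0 i.succ) * x 0)
        = starRingEnd ℂ s * x 0 := by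
      rw [hs, map_sum, Finset.sum_mul]
      exact Finset.sum_congr rfl fun i _ => by rw [_root_.map_mul]; ring
    rw [e3, hQB]
    ring
  -- expansion of the quadratic form of the Schur complement matrix
  have hT : star (fun i : Fin (n+1) => x i.succ) ⬝ᵥ
      ((Matrix.of (fun i j : Fin (n + 1) =>
        A i.succ j.succ - (1 / A 0 0) * (star (A 0 i.succ) * A 0 j.succ)) -
        (a : ℝ) • (1 : Matrix (Fin (n + 1)) (Fin (n + 1)) ℂ)) *ᵥ (fun i => x i.succ))
      = QB - (1/(α:ℂ)) * (starRingEnd ℂ s * s) - (a:ℂ) * Ny := by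
    have e1 : ∀ i : Fin (n+1),
        (((Matrix.of (fun i j : Fin (n + 1) =>
          A i.succ j.succ - (1 / A 0 0) * (star (A 0 i.succ) * A 0 j.succ)) -
          (a : ℝ) • (1 : Matrix (Fin (n + 1)) (Fin (n + 1)) ℂ)) *ᵥ (fun i => x i.succ)) i)
        = (∑ j : Fin (n+1), A i.succ j.succ * x j.succ)
          - (1/(α:ℂ)) * starRingEnd ℂ (A 0 i.succ) * s - (a:ℂ) * x i.succ := by
      intro i
      simp only [mulVec, dotProduct, Matrix.sub_apply, of_apply, Matrix.smul_apply, one_apply,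
        sub_mul, RCLike.star_def, smul_ite, ite_mul, smul_eq_mul, mul_ite, mul_zero, mul_one,
        zero_mul, smul_zero]
      rw [Finset.sum_sub_distrib, Finset.sum_sub_distrib, Finset.sum_ite_eq Finset.univ i]
      simp only [Finset.mem_univ, if_true, Complex.real_smul, mul_one]
      rw [hA00]
      congr 1
      congr 1
      rw [hs, Finset.mul_sum]
      exact Finset.sum_congr rfl fun j _ => by ring
    calc star (fun i : Fin (n+1) => x i.succ) ⬝ᵥ
        ((Matrix.of (fun i j : Fin (n + 1) =>
          A i.succ j.succ - (1 / A 0 0) * (star (A 0 i.succ) * A 0 j.succ)) -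
          (a : ℝ) • (1 : Matrix (Fin (n + 1)) (Fin (n + 1)) ℂ)) *ᵥ (fun i => x i.succ))
        = ∑ i : Fin (n+1), starRingEnd ℂ (x i.succ) *
            ((∑ j : Fin (n+1), A i.succ j.succ * x j.succ)
            - (1/(α:ℂ)) * starRingEnd ℂ (A 0 i.succ) * s - (a:ℂ) * x i.succ) := by
          rw [dotProduct]
          exact Finset.sum_congr rfl fun i _ => by
            rw [e1 i]; simp [RCLike.star_def]
      _ = QB - (1/(α:ℂ)) * (starRingEnd ℂ s * s) - (a:ℂ) * Ny := by
          simp only [mul_sub]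
          rw [Finset.sum_sub_distrib, Finset.sum_sub_distrib, hQB, hNy]
          congr 2
          · congr 1
            rw [hs, map_sum, Finset.sum_mul, Finset.mul_sum]
            exact Finset.sum_congr rfl fun i _ => by rw [_root_.map_mul]; ring
          · rw [Finset.mul_sum]
            exact Finset.sum_congr rfl fun i _ => by ring
  -- key identity
  have key : star x ⬝ᵥ A *ᵥ x = (α:ℂ) * (starRingEnd ℂ c * c)
      + (star (fun i : Fin (n+1) => x i.succ) ⬝ᵥ
      ((Matrix.of (fun i j : Fin (n + 1) =>
        A i.succ j.succ - (1 / A 0 0) * (star (A 0 i.succ) * A 0 j.succ)) -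
        (a : ℝ) • (1 : Matrix (Fin (n + 1)) (Fin (n + 1)) ℂ)) *ᵥ (fun i => x i.succ)))
      + (a:ℂ) * Ny := by
    rw [hQ, hT, hA00, hc]
    simp only [map_add, map_div₀, Complex.conj_ofReal]
    field_simp
    ring
  -- real-part identities
  have hcc : starRingEnd ℂ c * c = ((Complex.normSq c : ℝ) : ℂ) :=
    Complex.normSq_eq_conj_mul_self.symm
  have hNyr : Ny = ((ry : ℝ) : ℂ) := by
    rw [hNy, hry]
    push_cast
    exact Finset.sum_congr rfl fun i _ => Complex.normSq_eq_conj_mul_self.symm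
  have hTre : 0 ≤ (star (fun i : Fin (n+1) => x i.succ) ⬝ᵥ
      ((Matrix.of (fun i j : Fin (n + 1) =>
        A i.succ j.succ - (1 / A 0 0) * (star (A 0 i.succ) * A 0 j.succ)) -
        (a : ℝ) • (1 : Matrix (Fin (n + 1)) (Fin (n + 1)) ℂ)) *ᵥ (fun i => x i.succ))).re := by
    have h := hschur.dotProduct_mulVec_nonneg (fun i : Fin (n+1) => x i.succ)
    rw [Complex.le_def] at h
    simpa using h.1
  have hQre : (star x ⬝ᵥ A *ᵥ x).re = α * Complex.normSq c +
      (star (fun i : Fin (n+1) => x i.succ) ⬝ᵥ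
      ((Matrix.of (fun i j : Fin (n + 1) =>
        A i.succ j.succ - (1 / A 0 0) * (star (A 0 i.succ) * A 0 j.succ)) -
        (a : ℝ) • (1 : Matrix (Fin (n + 1)) (Fin (n + 1)) ℂ)) *ᵥ (fun i => x i.succ))).re
      + a * ry := by
    rw [key, hcc, hNyr]
    rw [← Complex.ofReal_mul, ← Complex.ofReal_mul]
    simp [Complex.add_re, Complex.ofReal_re]
  have hQim : (star x ⬝ᵥ A *ᵥ x).im = 0 := by
    have h := hA.posSemidef.dotProduct_mulVec_nonneg x
    rw [Complex.le_def] at h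
    simpa using h.2.symm
  -- vector norm computation
  have hN : star x ⬝ᵥ x = ((Complex.normSq (x 0) + ry : ℝ) : ℂ) := by
    have e : star x ⬝ᵥ x = ∑ i, starRingEnd ℂ (x i) * x i := by
      simp [dotProduct, RCLike.star_def]
    rw [e, Fin.sum_univ_succ, hry]
    push_cast
    rw [← Complex.normSq_eq_conj_mul_self]
    congr 1
    exact Finset.sum_congr rfl fun i _ => Complex.normSq_eq_conj_mul_self.symm
  -- norm inequalities
  have hry0 : 0 ≤ ry := by
    rw [hry]; exact Finset.sum_nonneg fun i _ => Complex.normSq_nonneg _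
  have hq0 : 0 ≤ Complex.normSq c := Complex.normSq_nonneg c
  have hp0 : 0 ≤ Complex.normSq (x 0) := Complex.normSq_nonneg _
  have habs_s : ‖s‖ ≤ α * ∑ j : Fin (n+1), ‖x j.succ‖ := by
    rw [hs]
    calc ‖∑ j : Fin (n+1), A 0 j.succ * x j.succ‖
        ≤ ∑ j : Fin (n+1), ‖A 0 j.succ * x j.succ‖ := norm_sum_le _ _
      _ = ∑ j : Fin (n+1), ‖A 0 j.succ‖ * ‖x j.succ‖ := by
          simp [norm_mul]
      _ ≤ ∑ j : Fin (n+1), α * ‖x j.succ‖ :=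
          Finset.sum_le_sum fun j _ =>
            mul_le_mul_of_nonneg_right (hub j) (norm_nonneg _)
      _ = α * ∑ j : Fin (n+1), ‖x j.succ‖ := (Finset.mul_sum _ _ _).symm
  have hsum_sq : (∑ j : Fin (n+1), ‖x j.succ‖)^2 ≤ ((n:ℝ)+1) * ry := by
    have h := sq_sum_le_card_mul_sum_sq
      (s := (Finset.univ : Finset (Fin (n+1)))) (f := fun j => ‖x j.succ‖)
    rw [hry]
    simp only [Complex.sq_norm, Finset.card_univ, Fintype.card_fin] at h
    push_cast at h ⊢
    exact h
  have hσ : Complex.normSq s ≤ α^2 * (((n:ℝ)+1) * ry) := by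
    have h0 : 0 ≤ ∑ j : Fin (n+1), ‖x j.succ‖ :=
      Finset.sum_nonneg fun j _ => norm_nonneg _
    nlinarith [Complex.sq_norm s, norm_nonneg s, habs_s, hsum_sq, hα]
  have hdiv : Complex.normSq s / α^2 ≤ ((n:ℝ)+1) * ry := by
    rw [div_le_iff₀ (by positivity : (0:ℝ) < α^2)]
    nlinarith [hσ]
  have hp : Complex.normSq (x 0) ≤ 2 * Complex.normSq c + 2 * (((n:ℝ)+1) * ry) := by
    have hx0 : x 0 = c - s / (α:ℂ) := by rw [hc]; ring
    have h1 : ‖x 0‖ ≤ ‖c‖ + ‖s / (α:ℂ)‖ := by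
      rw [hx0]
      have := norm_add_le c (-(s/(α:ℂ)))
      simpa [sub_eq_add_neg] using this
    have h2 : (‖s / (α:ℂ)‖)^2 = Complex.normSq s / α^2 := by
      rw [norm_div, Complex.norm_real, Real.norm_eq_abs, abs_of_pos hα, div_pow, Complex.sq_norm]
    have e0 : Complex.normSq (x 0) = ‖x 0‖^2 := (Complex.sq_norm _).symm
    have e1 : ‖x 0‖^2 ≤ (‖c‖ + ‖s/(α:ℂ)‖)^2 :=
      pow_le_pow_left₀ (norm_nonneg _) h1 2
    have e2 : (‖c‖ + ‖s/(α:ℂ)‖)^2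
        ≤ 2*(‖c‖)^2 + 2*(‖s/(α:ℂ)‖)^2 := by
      nlinarith [sq_nonneg (‖c‖ - ‖s/(α:ℂ)‖)]
    have e3 : (‖c‖)^2 = Complex.normSq c := Complex.sq_norm c
    linarith [e0, e1, e2, e3, h2, hdiv]
  -- put everything together
  have hfinal : star x ⬝ᵥ ((a / (2 * (n + 2)) : ℝ) •
      (1 : Matrix (Fin (n + 2)) (Fin (n + 2)) ℂ)) *ᵥ x
      = ((a / (2 * ((n:ℝ) + 2)) * (Complex.normSq (x 0) + ry) : ℝ) : ℂ) := by
    rw [smul_mulVec, one_mulVec, dotProduct_smul, Complex.real_smul, hN,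
      ← Complex.ofReal_mul]
  rw [sub_mulVec, dotProduct_sub, hfinal]
  rw [Complex.le_def]
  constructor
  · simp only [Complex.zero_re, Complex.sub_re, Complex.ofReal_re, hQre]
    rw [sub_nonneg, div_mul_eq_mul_div, div_le_iff₀ (by positivity : (0:ℝ) < 2*((n:ℝ)+2))]
    nlinarith [mul_le_mul_of_nonneg_left hp ha.le,
      mul_le_mul_of_nonneg_right ha' hq0,
      mul_nonneg (mul_nonneg (Nat.cast_nonneg n : (0:ℝ) ≤ n) hα.le) hq0,
      mul_nonneg ha.le hry0,
      mul_nonneg (mul_nonneg (Nat.cast_nonneg n : (0:ℝ) ≤ n) ha.le) hry0,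
      hTre, mul_nonneg (Nat.cast_nonneg n : (0:ℝ) ≤ n) hTre]
  · simp only [Complex.zero_im, Complex.sub_im, Complex.ofReal_im, hQim, sub_zero]
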